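/- Let Ω be a field, E an algebraically closed subfield of Ω, and a, b, d ∈ Ω algebraically independent over E. Write acl(F) for the relative algebraic closure in Ω of a subfield F of Ω, and E(a), E(a,d), E(b,d) for the subfields of Ω generated over E by the indicated elements. Then (a + d)·b ∈ acl(E(a,d))·acl(E(b,d)), but (a + d)·b ∉ acl(E(a,d)) and (a + d)·b ∉ acl(E(a))·acl(E(b,d)). -/

import Mathlib

open Pointwise

/-- The relative algebraic closure of a subfield `F` in `Ω`: the set of elements of `Ω`
that are algebraic over `F`. -/
def relAlgClosure {Ω : Type*} [Field Ω] (F : Subfield Ω) : Set Ω :=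
  {x : Ω | IsAlgebraic F x}

section Helpers


variable {Ω : Type*} [Field Ω]

/-- Generic characterization: algebraic over `R` iff a nonzero `Ω`-polynomial with
coefficients in the image of `R` kills `t`. -/
lemma isAlgebraic_iff_exists_poly {R : Type*} [CommRing R] [Algebra R Ω]
    (hinj : Function.Injective (algebraMap R Ω)) {t : Ω} :
    IsAlgebraic R t ↔ ∃ p : Polynomial Ω, p ≠ 0 ∧
      (∀ n, p.coeff n ∈ Set.range (algebraMap R Ω)) ∧ p.eval t = 0 := by
  constructor
  · rintro ⟨q, hq0, hq⟩
    refine ⟨q.map (algebraMap R Ω), ?_, fun n => ⟨q.coeff n, (Polynomial.coeff_map _ _).symm⟩, ?_⟩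
    · simpa [Polynomial.map_eq_zero_iff hinj] using hq0
    · rwa [Polynomial.eval_map, ← Polynomial.aeval_def]
  · rintro ⟨p, hp0, hmem, hev⟩
    choose c hc using hmem
    classical
    have hmap : (∑ n ∈ p.support, Polynomial.monomial n (c n)).map (algebraMap R Ω) = p := by
      ext m
      simp only [Polynomial.coeff_map, Polynomial.finset_sum_coeff,
        Polynomial.coeff_monomial, map_sum, apply_ite (algebraMap R Ω), map_zero]
      rw [Finset.sum_ite_eq' p.support m (fun n => algebraMap R Ω (c n))]
      split_ifs with h
      · exact hc m
      · simp [Polynomial.notMem_support_iff.mp h]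
    refine ⟨∑ n ∈ p.support, Polynomial.monomial n (c n), ?_, ?_⟩
    · intro h
      rw [h] at hmap
      simp only [Polynomial.map_zero] at hmap
      exact hp0 hmap.symm
    · rw [Polynomial.aeval_def, ← Polynomial.eval_map, hmap, hev]

lemma range_algebraMap_subfield (F : Subfield Ω) :
    Set.range (algebraMap ↥F Ω) = (F : Set Ω) := by
  ext x
  constructor
  · rintro ⟨y, rfl⟩; exact y.2
  · intro hx; exact ⟨⟨x, hx⟩, rfl⟩

lemma range_algebraMap_subalgebra {E : Subfield Ω} (A : Subalgebra ↥E Ω) :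
    Set.range (algebraMap ↥A Ω) = (A : Set Ω) := by
  ext x
  constructor
  · rintro ⟨y, rfl⟩; exact y.2
  · intro hx; exact ⟨⟨x, hx⟩, rfl⟩

lemma injective_algebraMap_subfield (F : Subfield Ω) :
    Function.Injective (algebraMap ↥F Ω) := Subtype.coe_injective

lemma injective_algebraMap_subalgebra {E : Subfield Ω} (A : Subalgebra ↥E Ω) :
    Function.Injective (algebraMap ↥A Ω) := Subtype.coe_injective

set_option maxHeartbeats 1000000 in
lemma transcendental_subfield_closure (E : Subfield Ω) (S : Set Ω) {t : Ω}
    (ht : Transcendental ↥(Algebra.adjoin ↥E S) t) :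
    Transcendental ↥(Subfield.closure ((E : Set Ω) ∪ S)) t := by
  intro halg
  apply ht
  rw [isAlgebraic_iff_exists_poly (injective_algebraMap_subfield _)] at halg
  obtain ⟨p, hp0, hmem, hev⟩ := halg
  simp only [range_algebraMap_subfield, SetLike.mem_coe, Subfield.mem_closure_iff] at hmem
  have hrep : ∀ n, ∃ y ∈ Subring.closure ((E : Set Ω) ∪ S),
      ∃ z ∈ Subring.closure ((E : Set Ω) ∪ S), z ≠ 0 ∧ p.coeff n = y / z := by
    intro n
    obtain ⟨y, hy, z, hz, hrep⟩ := hmem n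
    by_cases hz0 : z = 0
    · refine ⟨0, zero_mem _, 1, one_mem _, one_ne_zero, ?_⟩
      rw [← hrep, hz0]; simp
    · exact ⟨y, hy, z, hz, hz0, hrep.symm⟩
  choose y hy z hz hzne hcoeff using hrep
  classical
  set D : Ω := ∏ n ∈ p.support, z n with hD
  have hDne : D ≠ 0 := Finset.prod_ne_zero_iff.2 fun n _ => hzne n
  have hDmem : D ∈ Subring.closure ((E : Set Ω) ∪ S) :=
    Subring.prod_mem _ fun n _ => hz n
  have hsub : Subring.closure ((E : Set Ω) ∪ S) ≤ (Algebra.adjoin ↥E S).toSubring := by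
    refine Subring.closure_le.2 ?_
    rintro w (hw | hw)
    · exact Subalgebra.algebraMap_mem _ (⟨w, hw⟩ : ↥E)
    · exact Algebra.subset_adjoin hw
  refine (isAlgebraic_iff_exists_poly (R := ↥(Algebra.adjoin ↥E S))
    (injective_algebraMap_subalgebra _)).mpr ⟨Polynomial.C D * p, mul_ne_zero (by simpa using hDne) hp0, ?_,
    by rw [Polynomial.eval_mul, Polynomial.eval_C, hev, mul_zero]⟩
  intro n
  rw [range_algebraMap_subalgebra]
  by_cases hn : n ∈ p.support
  · have : (Polynomial.C D * p).coeff n = (∏ m ∈ p.support.erase n, z m) * y n := by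
      rw [Polynomial.coeff_C_mul, hcoeff n, hD, ← Finset.mul_prod_erase _ _ hn]
      rw [mul_comm (z n), mul_assoc, ← mul_div_assoc (z n), mul_div_cancel_left₀ _ (hzne n)]
    rw [this]
    exact Subalgebra.mem_toSubring.mp <| hsub (Subring.mul_mem _ (Subring.prod_mem _ fun m _ => hz m) (hy n))
  · have : (Polynomial.C D * p).coeff n = 0 := by
      rw [Polynomial.coeff_C_mul, Polynomial.notMem_support_iff.mp hn, mul_zero]
    rw [this]
    exact Subalgebra.zero_mem _

lemma mem_of_isAlgebraic_isAlgClosed (E : Subfield Ω) [IsAlgClosed ↥E] {x : Ω}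
    (hx : IsAlgebraic ↥E x) : x ∈ E := by
  have hbot : algebraicClosure ↥E Ω = ⊥ :=
    IntermediateField.eq_bot_of_isAlgClosed_of_isAlgebraic _
  have hmem : x ∈ algebraicClosure ↥E Ω := mem_algebraicClosure_iff.2 hx
  rw [hbot, IntermediateField.mem_bot, range_algebraMap_subfield] at hmem
  exact hmem

lemma range_algebraMap_intermediateField {F : Subfield Ω} (K : IntermediateField ↥F Ω) :
    Set.range (algebraMap ↥K Ω) = (K : Set Ω) := by
  ext x
  constructor
  · rintro ⟨y, rfl⟩; exact y.2
  · intro hx; exact ⟨⟨x, hx⟩, rfl⟩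

set_option synthInstance.maxHeartbeats 400000 in
set_option maxHeartbeats 1000000 in
lemma eq_zero_of_coeffs_algebraic (F : Subfield Ω) {x : Ω} (hx : Transcendental ↥F x)
    (p : Polynomial Ω) (hc : ∀ n, IsAlgebraic ↥F (p.coeff n)) (h0 : p.eval x = 0) :
    p = 0 := by
  by_contra hne
  apply hx
  have hKalg : IsAlgebraic ↥(algebraicClosure ↥F Ω) x := by
    refine (isAlgebraic_iff_exists_poly (R := ↥(algebraicClosure ↥F Ω))
      Subtype.coe_injective).mpr ⟨p, hne, ?_, h0⟩
    intro n
    rw [range_algebraMap_intermediateField]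
    exact mem_algebraicClosure_iff.2 (hc n)
  exact (isIntegral_trans (R := ↥F) (A := ↥(algebraicClosure ↥F Ω)) (B := Ω) x hKalg.isIntegral).isAlgebraic

set_option maxHeartbeats 1000000 in
lemma transcendental_of_indep (E : Subfield Ω) (x : Fin 3 → Ω)
    (hindep : AlgebraicIndependent ↥E x) (i j k : Fin 3)
    (hij : i ≠ j) (hik : i ≠ k) (hjk : j ≠ k) :
    Transcendental ↥(Subfield.closure ((E : Set Ω) ∪ {x j, x k})) (x i) := by
  apply transcendental_subfield_closure
  have h2 : AlgebraicIndependent ↥E ![x j, x k] := by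
    have h := hindep.comp ![j, k] (by
      intro m m'
      fin_cases m <;> fin_cases m' <;> simp [hjk, hjk.symm])
    have hxe : ![x j, x k] = x ∘ ![j, k] := by
      funext m; fin_cases m <;> simp
    rwa [hxe]
  have h3 : AlgebraicIndependent ↥E (fun o : Option (Fin 2) => o.elim (x i) ![x j, x k]) := by
    have hne : ∀ m : Fin 2, ![j, k] m ≠ i := by
      intro m; fin_cases m
      · exact hij.symm
      · exact hik.symm
    have hinj2 : Function.Injective ![j, k] := by
      intro m m'; fin_cases m <;> fin_cases m' <;> simp [hjk, hjk.symm]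
    have h := hindep.comp (fun o : Option (Fin 2) => o.elim i ![j, k]) (by
      intro o o' h
      cases o with
      | none =>
        cases o' with
        | none => rfl
        | some m => exact absurd h.symm (hne m)
      | some m =>
        cases o' with
        | none => exact absurd h (hne m)
        | some m' => exact congrArg _ (hinj2 h))
    have hxe : (fun o : Option (Fin 2) => o.elim (x i) ![x j, x k]) =
        x ∘ (fun o : Option (Fin 2) => o.elim i ![j, k]) := by
      funext o
      cases o with
      | none => rfl
      | some m => fin_cases m <;> rfl
    rwa [hxe]
  have h4 := (h2.option_iff_transcendental (x i)).1 h3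
  have hrange : Set.range ![x j, x k] = ({x j, x k} : Set Ω) := by
    rw [Matrix.range_cons, Matrix.range_cons_empty]
    ext w; simp; tauto
  rwa [hrange] at h4

lemma eval_mem_subfield (F : Subfield Ω) {q : Polynomial Ω} (hq : ∀ n, q.coeff n ∈ F)
    {e : Ω} (he : e ∈ F) : q.eval e ∈ F := by
  rw [Polynomial.eval_eq_sum, Polynomial.sum_def]
  exact Subfield.sum_mem _ fun n _ => Subfield.mul_mem _ (hq n) (Subfield.pow_mem _ he n)

lemma isAlgebraic_of_mem (F : Subfield Ω) {x : Ω} (hx : x ∈ F) : IsAlgebraic ↥F x :=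
  isAlgebraic_algebraMap (⟨x, hx⟩ : ↥F)

end Helpers

set_option maxHeartbeats 4000000 in
set_option synthInstance.maxHeartbeats 400000 in
/-- Let `Ω` be a field, `E` an algebraically closed subfield, and `a, b, d ∈ Ω`
algebraically independent over `E`. Then `(a + d)·b ∈ acl(E(a,d))·acl(E(b,d))`, but
`(a + d)·b ∉ acl(E(a,d))` and `(a + d)·b ∉ acl(E(a))·acl(E(b,d))`. -/
theorem a_add_d_mul_b_witness {Ω : Type*} [Field Ω] (E : Subfield Ω) [IsAlgClosed E]
    (a b d : Ω) (hindep : AlgebraicIndependent (↥E) ![a, b, d]) :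
    (a + d) * b ∈
        relAlgClosure (Subfield.closure ((E : Set Ω) ∪ {a, d})) *
          relAlgClosure (Subfield.closure ((E : Set Ω) ∪ {b, d})) ∧
      (a + d) * b ∉ relAlgClosure (Subfield.closure ((E : Set Ω) ∪ {a, d})) ∧
      (a + d) * b ∉
        relAlgClosure (Subfield.closure ((E : Set Ω) ∪ {a})) *
          relAlgClosure (Subfield.closure ((E : Set Ω) ∪ {b, d})) := by
  classical
  have hT_b_ad : Transcendental ↥(Subfield.closure ((E : Set Ω) ∪ {a, d})) b := by
    exact transcendental_of_indep E ![a, b, d] hindep 1 0 2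
      (by decide) (by decide) (by decide)
  have hT_a_bd : Transcendental ↥(Subfield.closure ((E : Set Ω) ∪ {b, d})) a := by
    exact transcendental_of_indep E ![a, b, d] hindep 0 1 2
      (by decide) (by decide) (by decide)
  have hT_d : Transcendental ↥E d := by simpa using hindep.transcendental 2
  have hb0 : b ≠ 0 := by
    intro h
    apply hindep.transcendental 1
    simp only [Matrix.cons_val_one, Matrix.head_cons]
    rw [h]
    exact isAlgebraic_zero
  have had : a + d ≠ 0 := by
    intro h
    apply hT_a_bd
    apply isAlgebraic_of_mem
    have hd : d ∈ Subfield.closure ((E : Set Ω) ∪ {b, d}) :=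
      Subfield.subset_closure (Or.inr (by simp))
    have ha : a = -d := eq_neg_of_add_eq_zero_left h
    rw [ha]
    exact neg_mem hd
  refine ⟨?_, ?_, ?_⟩
  · -- part 1
    have h1 : a + d ∈ relAlgClosure (Subfield.closure ((E : Set Ω) ∪ {a, d})) :=
      isAlgebraic_of_mem _ (add_mem (Subfield.subset_closure (Or.inr (by simp)))
        (Subfield.subset_closure (Or.inr (by simp))))
    have h2 : b ∈ relAlgClosure (Subfield.closure ((E : Set Ω) ∪ {b, d})) :=
      isAlgebraic_of_mem _ (Subfield.subset_closure (Or.inr (by simp)))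
    exact Set.mul_mem_mul h1 h2
  · -- part 2
    intro h
    have ht' : IsAlgebraic ↥(Subfield.closure ((E : Set Ω) ∪ {a, d})) ((a + d) * b) := h
    set Fad := Subfield.closure ((E : Set Ω) ∪ {a, d}) with hFad
    have hsum : a + d ∈ algebraicClosure ↥Fad Ω :=
      mem_algebraicClosure_iff.2 (isAlgebraic_of_mem _
        (add_mem (Subfield.subset_closure (Or.inr (by simp)))
          (Subfield.subset_closure (Or.inr (by simp)))))
    have htK : (a + d) * b ∈ algebraicClosure ↥Fad Ω := mem_algebraicClosure_iff.2 ht'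
    have hbK : b ∈ algebraicClosure ↥Fad Ω := by
      have hbe : b = (a + d)⁻¹ * ((a + d) * b) := by field_simp
      rw [hbe]
      exact mul_mem (inv_mem hsum) htK
    exact hT_b_ad (mem_algebraicClosure_iff.1 hbK)
  · -- part 3
    intro hmem
    rw [Set.mem_mul] at hmem
    obtain ⟨u, hu, v, hv, huv⟩ := hmem
    set Fbd := Subfield.closure ((E : Set Ω) ∪ {b, d}) with hFbd
    have hu' : IsAlgebraic ↥(Subfield.closure ((E : Set Ω) ∪ {a})) u := hu
    have hv' : IsAlgebraic ↥Fbd v := hv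
    have hv0 : v ≠ 0 := by
      intro h
      rw [h, mul_zero] at huv
      exact mul_ne_zero had hb0 huv.symm
    set α := b / v with hα
    set β := b * d / v with hβ
    have hαne : α ≠ 0 := div_ne_zero hb0 hv0
    have hueq : u = α * a + β := by
      rw [hα, hβ]
      field_simp
      linear_combination huv
    -- clearing denominators: polynomial over E[a] killing u
    have hu2 : IsAlgebraic ↥(Algebra.adjoin ↥E ({a} : Set Ω)) u := by
      by_contra hcon
      exact transcendental_subfield_closure E {a} hcon hu'
    obtain ⟨p, hp0, hpc, hpu⟩ :=
      (isAlgebraic_iff_exists_poly (injective_algebraMap_subalgebra _)).1 hu2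
    have hpc' : ∀ n, p.coeff n ∈ Algebra.adjoin ↥E ({a} : Set Ω) := by
      intro n
      have h := hpc n
      rwa [range_algebraMap_subalgebra] at h
    have hrep : ∀ n, ∃ g : Polynomial ↥E, Polynomial.aeval a g = p.coeff n := by
      intro n
      have h := hpc' n
      rwa [Algebra.adjoin_singleton_eq_range_aeval, AlgHom.mem_range] at h
    choose g hg using hrep
    set G : ℕ → Polynomial Ω := fun n => (g n).map (algebraMap ↥E Ω) with hG
    have hGeval : ∀ n, (G n).eval a = p.coeff n := by
      intro n
      rw [hG]
      rw [Polynomial.eval_map, ← Polynomial.aeval_def, hg n]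
    have hGcoeff : ∀ n m, (G n).coeff m ∈ E := by
      intro n m
      rw [hG]
      simp only [Polynomial.coeff_map]
      exact ((g n).coeff m).2
    set L : Polynomial Ω := Polynomial.C α * Polynomial.X + Polynomial.C β with hL
    set Q : Polynomial Ω := ∑ n ∈ p.support, G n * L ^ n with hQ
    rw [hueq] at hpu
    have hQa : Q.eval a = 0 := by
      rw [hQ, Polynomial.eval_finset_sum]
      simp only [Polynomial.eval_mul, Polynomial.eval_pow, hL, Polynomial.eval_add,
        Polynomial.eval_C, Polynomial.eval_X]
      calc ∑ n ∈ p.support, (G n).eval a * (α * a + β) ^ n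
          = ∑ n ∈ p.support, p.coeff n * (α * a + β) ^ n :=
            Finset.sum_congr rfl fun n _ => by rw [hGeval n]
        _ = p.eval (α * a + β) := by rw [Polynomial.eval_eq_sum, Polynomial.sum_def]
        _ = 0 := hpu
    -- coefficients of Q are algebraic over Fbd
    have hvK : v ∈ algebraicClosure ↥Fbd Ω := mem_algebraicClosure_iff.2 hv'
    have hbK3 : b ∈ algebraicClosure ↥Fbd Ω :=
      mem_algebraicClosure_iff.2 (isAlgebraic_of_mem _ (Subfield.subset_closure (Or.inr (by simp))))
    have hdK3 : d ∈ algebraicClosure ↥Fbd Ω :=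
      mem_algebraicClosure_iff.2 (isAlgebraic_of_mem _ (Subfield.subset_closure (Or.inr (by simp))))
    have hαK : α ∈ algebraicClosure ↥Fbd Ω := by
      rw [hα, div_eq_mul_inv]
      exact mul_mem hbK3 (inv_mem hvK)
    have hβK : β ∈ algebraicClosure ↥Fbd Ω := by
      rw [hβ, div_eq_mul_inv]
      exact mul_mem (mul_mem hbK3 hdK3) (inv_mem hvK)
    have hEK : ∀ e : Ω, e ∈ E → e ∈ algebraicClosure ↥Fbd Ω := fun e he =>
      mem_algebraicClosure_iff.2 (isAlgebraic_of_mem _ (Subfield.subset_closure (Or.inl he)))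
    have hQco : ∀ m, Q.coeff m ∈ algebraicClosure ↥Fbd Ω := by
      have hQl : Q ∈ Polynomial.lifts (algebraMap ↥(algebraicClosure ↥Fbd Ω) Ω) := by
        rw [hQ]
        refine Subsemiring.sum_mem _ fun n _ => Subsemiring.mul_mem _ ?_
          (Subsemiring.pow_mem _ ?_ n)
        · rw [Polynomial.lifts_iff_coeff_lifts]
          intro m
          rw [range_algebraMap_intermediateField]
          exact hEK _ (hGcoeff n m)
        · rw [hL]
          refine Subsemiring.add_mem _ (Subsemiring.mul_mem _ ?_ ?_) ?_
          · rw [Polynomial.lifts_iff_coeff_lifts]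
            intro m
            rw [range_algebraMap_intermediateField]
            rw [Polynomial.coeff_C]
            split_ifs
            · exact hαK
            · exact zero_mem _
          · rw [Polynomial.lifts_iff_coeff_lifts]
            intro m
            rw [range_algebraMap_intermediateField, Polynomial.coeff_X]
            split_ifs
            · exact one_mem _
            · exact zero_mem _
          · rw [Polynomial.lifts_iff_coeff_lifts]
            intro m
            rw [range_algebraMap_intermediateField, Polynomial.coeff_C]
            split_ifs
            · exact hβK
            · exact zero_mem _
      intro m
      have h := (Polynomial.lifts_iff_coeff_lifts _).1 hQl m
      rwa [range_algebraMap_intermediateField] at h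
    have hQ0 : Q = 0 := eq_zero_of_coeffs_algebraic Fbd hT_a_bd Q
      (fun n => mem_algebraicClosure_iff.1 (hQco n)) hQa
    -- pick two good evaluation points in E
    have hi₀ : p.coeff p.natDegree ≠ 0 := by
      rw [← Polynomial.leadingCoeff]
      exact Polynomial.leadingCoeff_ne_zero.2 hp0
    have hi₀s : p.natDegree ∈ p.support := Polynomial.mem_support_iff.2 hi₀
    have hGne : G p.natDegree ≠ 0 := fun h =>
      hi₀ (by rw [← hGeval p.natDegree, h, Polynomial.eval_zero])
    have hroots : {e : Ω | (G p.natDegree).IsRoot e}.Finite :=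
      Polynomial.finite_setOf_isRoot hGne
    have hEinf : (E : Set Ω).Infinite :=
      Set.infinite_coe_iff.1 (by exact (inferInstance : Infinite ↥E))
    obtain ⟨e₁, he₁, e₂, he₂, hne12⟩ := (hEinf.diff hroots).nontrivial
    have hw : ∀ e, e ∈ (E : Set Ω) \ {e : Ω | (G p.natDegree).IsRoot e} → α * e + β ∈ E := by
      rintro e ⟨heE, heR⟩
      set H : Polynomial Ω := ∑ n ∈ p.support, Polynomial.C ((G n).eval e) * Polynomial.X ^ n
        with hH
      have hHcoeff : ∀ m, H.coeff m ∈ E := by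
        intro m
        rw [hH, Polynomial.finset_sum_coeff]
        refine Subfield.sum_mem _ fun n _ => ?_
        rw [Polynomial.coeff_C_mul, Polynomial.coeff_X_pow]
        split_ifs
        · rw [mul_one]
          exact eval_mem_subfield E (hGcoeff n) heE
        · rw [mul_zero]
          exact zero_mem _
      have hHcoeff₀ : H.coeff p.natDegree = (G p.natDegree).eval e := by
        rw [hH, Polynomial.finset_sum_coeff]
        simp only [Polynomial.coeff_C_mul, Polynomial.coeff_X_pow, mul_ite, mul_one, mul_zero]
        rw [Finset.sum_ite_eq p.support p.natDegree (fun n => (G n).eval e)]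
        simp [hi₀s]
      have hHne : H ≠ 0 := by
        intro h
        apply heR
        have h0 : H.coeff p.natDegree = 0 := by rw [h]; simp
        rw [hHcoeff₀] at h0
        exact h0
      have hHeval : H.eval (α * e + β) = 0 := by
        have hQe : Q.eval e = 0 := by rw [hQ0]; simp
        rw [hQ, Polynomial.eval_finset_sum] at hQe
        simp only [Polynomial.eval_mul, Polynomial.eval_pow, hL, Polynomial.eval_add,
          Polynomial.eval_C, Polynomial.eval_X] at hQe
        rw [hH, Polynomial.eval_finset_sum]
        simpa only [Polynomial.eval_mul, Polynomial.eval_pow, Polynomial.eval_C,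
          Polynomial.eval_X] using hQe
      have halg : IsAlgebraic ↥E (α * e + β) :=
        (isAlgebraic_iff_exists_poly (injective_algebraMap_subfield E)).2
          ⟨H, hHne, fun n => by rw [range_algebraMap_subfield]; exact hHcoeff n, hHeval⟩
      exact mem_of_isAlgebraic_isAlgClosed E halg
    have hw1 := hw e₁ he₁
    have hw2 := hw e₂ he₂
    have hαE : α ∈ E := by
      have heq : α = ((α * e₁ + β) - (α * e₂ + β)) / (e₁ - e₂) := by
        field_simp [sub_ne_zero.2 hne12]
        ring
      rw [heq]
      exact Subfield.div_mem _ (Subfield.sub_mem _ hw1 hw2) (Subfield.sub_mem _ he₁.1 he₂.1)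
    have hβE : β ∈ E := by
      have heq : β = (α * e₁ + β) - α * e₁ := by ring
      rw [heq]
      exact Subfield.sub_mem _ hw1 (Subfield.mul_mem _ hαE he₁.1)
    have hdE : d ∈ E := by
      have heq : d = β / α := by
        rw [hβ, hα]
        field_simp
      rw [heq]
      exact Subfield.div_mem _ hβE hαE
    exact hT_d (isAlgebraic_of_mem E hdE)
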